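/- arXiv:1508.07337 — 4 statements merged into one kernel-verified Lean document; each statement's English description precedes it below -/
import Mathlib

section
/- Let G be an undirected graph with finite vertex set V(G) and finite edge set E(G), and let S be the ℤ₂-subspace of ℤ₂·E(G) spanned by the vectors Σ_{x ∈ E(v)∖L(v)} x for v ∈ V(G). Then: (1) α_undirected(G) ≤ |E(G)| − dim_{ℤ₂} S ≤ β_undirected(G); in particular, |E(G)| > dim_{ℤ₂} S if and only if G contains an undirected cycle. (2) For every vertex v, α_undirected(G, v) ≤ |E(v)| − dim_{ℤ₂}((ℤ₂·E(v)) ∩ S) ≤ β_undirected(G, v), where ℤ₂·E(v) is the subspace of ℤ₂·E(G) spanned by E(v); in particular, |E(v)| > dim_{ℤ₂}((ℤ₂·E(v)) ∩ S) if and only if there is an undirected cycle in G containing v. -/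
open MvPolynomial

/-- An undirected cycle in the undirected graph with edge-endpoints map
`ends : E → Sym2 V`: pairwise distinct vertices `v_0, …, v_n` and pairwise distinct
edges `x_0, …, x_n` such that `x_i` joins `v_i` and `v_{i+1}` (indices mod `n+1`). -/
structure UCycle {V E : Type} (ends : E → Sym2 V) where
  n : ℕ
  vtx : ZMod (n + 1) → V
  edge : ZMod (n + 1) → E
  vtx_inj : Function.Injective vtx
  edge_inj : Function.Injective edge
  edge_ends : ∀ i, ends (edge i) = s(vtx i, vtx (i + 1))

/-- The vector `Σ_{x ∈ E(v) \ L(v)} x` of `ℤ₂·E(G)`: the sum of the basis vectors of the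
non-loop edges incident at `v`. -/
def vertexVec {V E : Type} [DecidableEq V] (ends : E → Sym2 V) (v : V) : E → ZMod 2 :=
  fun x => if v ∈ ends x ∧ ends x ≠ s(v, v) then 1 else 0

/-- `α_undirected(G)` for an undirected graph. -/
noncomputable def uPacking {V E : Type} (ends : E → Sym2 V) : ℕ :=
  sSup {k | ∃ f : Fin k → UCycle ends,
    ∀ i j, i ≠ j → Disjoint (Set.range (f i).edge) (Set.range (f j).edge)}

/-- `β_undirected(G)` for an undirected graph. -/
noncomputable def uCutNumber {V E : Type} [Fintype E] (ends : E → Sym2 V) : ℕ :=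
  sInf {k | ∃ S : Finset E, S.card = k ∧ ∀ c : UCycle ends, ∃ x ∈ S, x ∈ Set.range c.edge}

/-- `α_undirected(G, v)` for an undirected graph. -/
noncomputable def uPackingAt {V E : Type} (ends : E → Sym2 V) (v : V) : ℕ :=
  sSup {k | ∃ f : Fin k → UCycle ends, (∀ i, v ∈ Set.range (f i).vtx) ∧
    ∀ i j, i ≠ j → Disjoint (Set.range (f i).edge) (Set.range (f j).edge)}

/-- `β_undirected(G, v)` for an undirected graph. -/
noncomputable def uCutNumberAt {V E : Type} [Fintype E] [DecidableEq V]
    (ends : E → Sym2 V) (v : V) : ℕ :=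
  sInf {k | ∃ S : Finset E, (∀ x ∈ S, v ∈ ends x) ∧ S.card = k ∧
    ∀ c : UCycle ends, v ∈ Set.range c.vtx → ∃ x ∈ S, x ∈ Set.range c.edge}

namespace Stmt16Aux
set_option linter.unusedSectionVars false

open Module Submodule Finset

variable {V E : Type} [Fintype V] [Fintype E] [DecidableEq V] [DecidableEq E]

noncomputable def B (E : Type) [Fintype E] : LinearMap.BilinForm (ZMod 2) (E → ZMod 2) :=
  LinearMap.mk₂ (ZMod 2) (fun f g => ∑ x, f x * g x)
    (fun f g h => by simp [add_mul, Finset.sum_add_distrib])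
    (fun c f g => by simp [Finset.mul_sum, mul_assoc])
    (fun f g h => by simp [mul_add, Finset.sum_add_distrib])
    (fun c f g => by simp [Finset.mul_sum, mul_left_comm])

lemma B_apply (f g : E → ZMod 2) : B E f g = ∑ x, f x * g x := rfl

lemma B_single (f : E → ZMod 2) (x : E) : B E f (Pi.single x 1) = f x := by
  simp [B_apply, Pi.single_apply]

lemma B_single' (f : E → ZMod 2) (x : E) : B E (Pi.single x 1) f = f x := by
  simp [B_apply, Pi.single_apply]

lemma B_refl : (B E).IsRefl := by
  intro f g h
  show ∑ x, g x * f x = 0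
  rw [Finset.sum_congr rfl fun x _ => mul_comm (g x) (f x)]
  exact h

lemma B_symm (f g : E → ZMod 2) : B E f g = B E g f := by
  rw [B_apply, B_apply]
  exact Finset.sum_congr rfl fun x _ => mul_comm _ _

lemma B_nondegen : (B E).Nondegenerate := by
  refine ⟨fun f hf => ?_, fun f hf => ?_⟩ <;> funext x
  · have := hf (Pi.single x 1)
    rwa [B_single] at this
  · have := hf (Pi.single x 1)
    rwa [B_single'] at this

lemma z2one (a : ZMod 2) (h : a ≠ 0) : a = 1 := by revert a; decide

lemma z2cases (a : ZMod 2) : a = 0 ∨ a = 1 := by revert a; decide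

lemma mem_orth_span_iff (s : Set (E → ZMod 2)) (f : E → ZMod 2) :
    f ∈ (B E).orthogonal (span (ZMod 2) s) ↔ ∀ g ∈ s, B E g f = 0 := by
  constructor
  · intro h g hg; exact h g (subset_span hg)
  · intro h n hn
    induction hn using Submodule.span_induction with
    | mem g hg => exact h g hg
    | zero => show B E 0 f = 0; rw [map_zero]; rfl
    | add a b _ _ ha hb =>
        show B E (a + b) f = 0
        rw [map_add, LinearMap.add_apply, ha, hb, add_zero]
    | smul c a _ ha =>
        show B E (c • a) f = 0
        rw [map_smul, LinearMap.smul_apply, ha, smul_zero]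

variable (ends : E → Sym2 V)

lemma B_vertexVec (f : E → ZMod 2) (w : V) :
    B E (vertexVec ends w) f =
      ((univ.filter fun x => f x = 1 ∧ w ∈ ends x ∧ ends x ≠ s(w, w)).card : ZMod 2) := by
  rw [B_apply, ← Finset.sum_boole]
  refine Finset.sum_congr rfl fun x _ => ?_
  unfold vertexVec
  rcases z2cases (f x) with h | h <;> rw [h] <;> split_ifs with h1 h2 <;> simp_all


lemma B_vertexVec_eq_zero_iff (f : E → ZMod 2) (w : V) :
    B E (vertexVec ends w) f = 0 ↔
      Even (univ.filter fun x => f x = 1 ∧ w ∈ ends x ∧ ends x ≠ s(w, w)).card := by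
  rw [B_vertexVec, ZMod.natCast_eq_zero_iff]
  exact (even_iff_two_dvd).symm

/-- a loop gives a 1-cycle -/
def loopCycle (e : E) (w : V) (h : ends e = s(w, w)) : UCycle ends where
  n := 0
  vtx := fun _ => w
  edge := fun _ => e
  vtx_inj := fun a b _ => ZMod.val_injective _ (by have := ZMod.val_lt a; have := ZMod.val_lt b; omega)
  edge_inj := fun a b _ => ZMod.val_injective _ (by have := ZMod.val_lt a; have := ZMod.val_lt b; omega)
  edge_ends := fun _ => h

lemma path_q_inj {k : ℕ} (p : Fin (k + 2) → V) (q : Fin (k + 1) → E)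
    (hp : Function.Injective p)
    (hq : ∀ i : Fin (k + 1), ends (q i) = s(p i.castSucc, p i.succ)) :
    Function.Injective q := by
  intro a b hab
  have h := (hq a).symm.trans (congrArg ends hab |>.trans (hq b))
  rw [Sym2.eq_iff] at h
  rcases h with ⟨h1, h2⟩ | ⟨h1, h2⟩
  · have := hp h1
    exact Fin.ext (by simpa [Fin.ext_iff] using this)
  · have e1 := hp h1
    have e2 := hp h2
    simp only [Fin.ext_iff, Fin.coe_castSucc, Fin.val_succ] at e1 e2
    exact Fin.ext (by omega)

lemma cycle_of_path {k : ℕ} (p : Fin (k + 2) → V) (q : Fin (k + 1) → E)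
    (hp : Function.Injective p)
    (hq : ∀ i : Fin (k + 1), ends (q i) = s(p i.castSucc, p i.succ))
    (e' : E) (j : Fin (k + 2)) (hj : j.val < k + 1)
    (he' : ends e' = s(p (Fin.last (k + 1)), p j))
    (hne : e' ≠ q (Fin.last k)) :
    ∃ c : UCycle ends, ∀ i, c.edge i = e' ∨ ∃ i' : Fin (k + 1), c.edge i = q i' := by
  have hqinj := path_q_inj ends p q hp hq
  -- e' differs from all q i'
  have he'q : ∀ i' : Fin (k + 1), e' ≠ q i' := by
    intro i' hcon
    have h := he'.symm.trans (congrArg ends hcon |>.trans (hq i'))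
    rw [Sym2.eq_iff] at h
    rcases h with ⟨h1, h2⟩ | ⟨h1, h2⟩
    · have := hp h1
      simp only [Fin.ext_iff, Fin.val_last, Fin.coe_castSucc] at this
      omega
    · have e1 := hp h1
      have e2 := hp h2
      simp only [Fin.ext_iff, Fin.val_last, Fin.coe_castSucc, Fin.val_succ] at e1 e2
      apply hne
      rw [hcon]
      congr 1
      exact Fin.ext (by simp [Fin.val_last]; omega)
  set n := k + 1 - j.val with hn
  have hjk : j.val + n = k + 1 := by omega
  have hvlt : ∀ i : ZMod (n + 1), i.val < n + 1 := fun i => ZMod.val_lt i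
  refine ⟨⟨n,
    fun i => p ⟨j.val + i.val, by have := hvlt i; omega⟩,
    fun i => if h : i.val < n then q ⟨j.val + i.val, by omega⟩ else e',
    ?_, ?_, ?_⟩, ?_⟩
  · intro a b hab
    have := hp hab
    simp only [Fin.mk.injEq] at this
    exact ZMod.val_injective _ (by omega)
  · intro a b hab
    beta_reduce at hab
    by_cases ha : a.val < n <;> by_cases hb : b.val < n
    · rw [dif_pos ha, dif_pos hb] at hab
      have := hqinj hab
      simp only [Fin.mk.injEq] at this
      exact ZMod.val_injective _ (by omega)
    · rw [dif_pos ha, dif_neg hb] at hab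
      exact absurd hab.symm (he'q _)
    · rw [dif_neg ha, dif_pos hb] at hab
      exact absurd hab (he'q _)
    · have := hvlt a; have := hvlt b
      exact ZMod.val_injective _ (by omega)
  · intro i
    have hone : (1 : ZMod (n + 1)).val = 1 % (n + 1) := ZMod.val_one_eq_one_mod _
    by_cases hi : i.val < n
    · have hn1 : 1 ≤ n := by omega
      have e1 : 1 % (n + 1) = 1 := Nat.mod_eq_of_lt (by omega)
      have hval : (i + 1).val = i.val + 1 := by
        rw [ZMod.val_add, hone, e1]
        exact Nat.mod_eq_of_lt (by omega)
      have hlt1 : j.val + i.val < k + 1 := by omega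
      rw [dif_pos hi, hq ⟨j.val + i.val, hlt1⟩]
      apply congrArg₂ (fun a b => s(p a, p b)) (Fin.ext ?_) (Fin.ext ?_)
      · simp
      · simp only [Fin.val_succ, hval]; omega
    · have hieq : i.val = n := by have := hvlt i; omega
      have hval : (i + 1).val = 0 := by
        rcases Nat.eq_zero_or_pos n with h0 | h0
        · have hi0 : i.val = 0 := by omega
          rw [ZMod.val_add, hone, hi0, h0]
        · have e1 : 1 % (n + 1) = 1 := Nat.mod_eq_of_lt (by omega)
          rw [ZMod.val_add, hone, e1, hieq]
          exact Nat.mod_self _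
      rw [dif_neg hi, he']
      apply congrArg₂ (fun a b => s(p a, p b)) (Fin.ext ?_) (Fin.ext ?_)
      · simp only [Fin.val_last]; omega
      · simp [hval]
  · intro i
    dsimp only
    by_cases hi : i.val < n
    · right; exact ⟨_, dif_pos hi⟩
    · left; exact dif_neg hi


lemma snoc_inj {m : ℕ} {α : Type} {p : Fin (m + 1) → α} {u : α}
    (hp : Function.Injective p) (hu : ∀ j, p j ≠ u) :
    Function.Injective (Fin.snoc p u : Fin (m + 2) → α) := by
  intro a b hab
  rcases Fin.eq_castSucc_or_eq_last a with ⟨a', rfl⟩ | rfl <;>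
    rcases Fin.eq_castSucc_or_eq_last b with ⟨b', rfl⟩ | rfl
  · rw [Fin.snoc_castSucc, Fin.snoc_castSucc] at hab
    exact congrArg Fin.castSucc (hp hab)
  · rw [Fin.snoc_castSucc, Fin.snoc_last] at hab
    exact absurd hab (hu a')
  · rw [Fin.snoc_castSucc, Fin.snoc_last] at hab
    exact absurd hab.symm (hu b')
  · rfl

lemma sym2_rep (z : Sym2 V) : ∃ a b, z = s(a, b) :=
  Sym2.ind (fun a b => ⟨a, b, rfl⟩) z

lemma exists_cycle (f : E → ZMod 2) (hf : ∀ w, B E (vertexVec ends w) f = 0)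
    (x0 : E) (hx0 : f x0 = 1) : ∃ c : UCycle ends, ∀ i, f (c.edge i) = 1 := by
  by_cases hloop : ∃ e w, f e = 1 ∧ ends e = s(w, w)
  · obtain ⟨e, w, he, hew⟩ := hloop
    exact ⟨loopCycle ends e w hew, fun _ => he⟩
  push_neg at hloop
  have key : ∀ k : ℕ, (∃ c : UCycle ends, ∀ i, f (c.edge i) = 1) ∨
      ∃ (p : Fin (k + 2) → V) (q : Fin (k + 1) → E), Function.Injective p ∧
        (∀ i, f (q i) = 1) ∧ ∀ i : Fin (k + 1), ends (q i) = s(p i.castSucc, p i.succ) := by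
    intro k
    induction k with
    | zero =>
      right
      obtain ⟨a, b, hab⟩ := sym2_rep (ends x0)
      have hne : a ≠ b := by rintro rfl; exact hloop x0 a hx0 hab
      refine ⟨![a, b], ![x0], ?_, ?_, ?_⟩
      · intro i j hij
        fin_cases i <;> fin_cases j <;> simp_all
      · intro i; fin_cases i; exact hx0
      · intro i; fin_cases i; simpa using hab
    | succ k ih =>
      rcases ih with h | ⟨p, q, hp, hfq, hq⟩
      · exact Or.inl h
      set w := p (Fin.last (k + 1)) with hw
      set T := univ.filter fun x => f x = 1 ∧ w ∈ ends x ∧ ends x ≠ s(w, w) with hT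
      have hTeven : Even T.card := (B_vertexVec_eq_zero_iff ends f w).mp (hf w)
      have hlast_mem : q (Fin.last k) ∈ T := by
        rw [hT, mem_filter]
        refine ⟨mem_univ _, hfq _, ?_, hloop _ _ (hfq _)⟩
        rw [hq (Fin.last k), Fin.succ_last, ← hw]
        exact Sym2.mem_mk_right _ _
      obtain ⟨e', he'T, he'ne⟩ : ∃ e' ∈ T, e' ≠ q (Fin.last k) :=
        Finset.exists_mem_ne (by
          rcases hTeven with ⟨m, hm⟩
          have : T.card ≠ 0 := Finset.card_ne_zero_of_mem hlast_mem
          omega) _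
      rw [hT, mem_filter] at he'T
      obtain ⟨-, hfe', hwe', hnl'⟩ := he'T
      obtain ⟨u, hu⟩ : ∃ u, ends e' = s(w, u) := ⟨(Sym2.Mem.other hwe'), (Sym2.other_spec hwe').symm⟩
      have hune : u ≠ w := by
        rintro rfl
        exact hnl' hu
      by_cases hmem : ∃ j, p j = u
      · left
        obtain ⟨j, hj⟩ := hmem
        have hjlt : j.val < k + 1 := by
          rcases Nat.lt_or_ge j.val (k + 1) with h | h
          · exact h
          · exfalso
            have : j = Fin.last (k + 1) := Fin.ext (by have := j.isLt; simp [Fin.val_last]; omega)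
            rw [this] at hj
            exact hune hj.symm
        obtain ⟨c, hc⟩ := cycle_of_path ends p q hp hq e' j hjlt (by rw [hu, hj]) he'ne
        refine ⟨c, fun i => ?_⟩
        rcases hc i with h | ⟨i', h⟩
        · rw [h]; exact hfe'
        · rw [h]; exact hfq i'
      · right
        push_neg at hmem
        refine ⟨Fin.snoc p u, Fin.snoc q e', snoc_inj hp hmem, ?_, ?_⟩
        · intro i
          rcases Fin.eq_castSucc_or_eq_last i with ⟨i', rfl⟩ | rfl
          · rw [Fin.snoc_castSucc]; exact hfq i'
          · rw [Fin.snoc_last]; exact hfe'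
        · intro i
          rcases Fin.eq_castSucc_or_eq_last i with ⟨i', rfl⟩ | rfl
          · rw [Fin.snoc_castSucc, Fin.snoc_castSucc, Fin.succ_castSucc, Fin.snoc_castSucc]
            exact hq i'
          · rw [Fin.snoc_last, Fin.succ_last, Fin.snoc_last, Fin.snoc_castSucc, hu, ← hw]
  rcases key (Fintype.card V) with h | ⟨p, _, hp, _, _⟩
  · exact h
  · have := Fintype.card_le_of_injective p hp
    simp at this


open Classical in
/-- indicator vector of the edge set of a cycle -/
noncomputable def cyc (c : UCycle ends) : E → ZMod 2 :=
  fun x => if x ∈ Set.range c.edge then 1 else 0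

lemma cyc_edge (c : UCycle ends) (i : ZMod (c.n + 1)) : cyc ends c (c.edge i) = 1 := by
  unfold cyc
  rw [if_pos ⟨i, rfl⟩]

lemma cyc_not_edge (c : UCycle ends) (x : E) (h : x ∉ Set.range c.edge) : cyc ends c x = 0 := by
  unfold cyc
  rw [if_neg h]

lemma cyc_eq_one_iff (c : UCycle ends) (x : E) : cyc ends c x = 1 ↔ x ∈ Set.range c.edge := by
  constructor
  · intro h
    by_contra hc
    rw [cyc_not_edge ends c x hc] at h
    exact absurd h (by decide)
  · rintro ⟨i, rfl⟩
    exact cyc_edge ends c i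

lemma mem_ends_of_edge (c : UCycle ends) (w : V) (i : ZMod (c.n + 1))
    (h : w ∈ ends (c.edge i)) : w ∈ Set.range c.vtx := by
  rw [c.edge_ends i, Sym2.mem_iff] at h
  rcases h with h | h
  · exact ⟨i, h.symm⟩
  · exact ⟨i + 1, h.symm⟩

lemma one_ne_zero_zmod (n : ℕ) (hn : n ≠ 0) : (1 : ZMod (n + 1)) ≠ 0 := by
  intro h
  have h1 : (1 : ZMod (n + 1)).val = 1 % (n + 1) := ZMod.val_one_eq_one_mod _
  have h2 : (1 % (n + 1)) = 1 := Nat.mod_eq_of_lt (by omega)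
  rw [h, ZMod.val_zero, h2] at h1
  exact one_ne_zero h1.symm

lemma cyc_ker (c : UCycle ends) (w : V) : B E (vertexVec ends w) (cyc ends c) = 0 := by
  rw [B_vertexVec_eq_zero_iff]
  by_cases hw : w ∈ Set.range c.vtx
  · obtain ⟨i0, hi0⟩ := hw
    by_cases hn : c.n = 0
    · have hall : ∀ a b : ZMod (c.n + 1), a = b := fun a b =>
        ZMod.val_injective _ (by have := ZMod.val_lt a; have := ZMod.val_lt b; omega)
      have hempty : (univ.filter fun x => cyc ends c x = 1 ∧ w ∈ ends x ∧ ends x ≠ s(w, w)) = ∅ := by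
        ext x
        simp only [mem_filter, Finset.notMem_empty, iff_false, not_and]
        intro _ h1 h2
        obtain ⟨j, rfl⟩ := (cyc_eq_one_iff ends c _).mp h1
        rw [c.edge_ends j, hall (j + 1) i0, hall j i0, hi0]
        exact fun h => h rfl
      rw [hempty, Finset.card_empty]
      exact Even.zero
    · have key : (univ.filter fun x => cyc ends c x = 1 ∧ w ∈ ends x ∧ ends x ≠ s(w, w)) =
          {c.edge (i0 - 1), c.edge i0} := by
        ext x
        rw [mem_filter, mem_insert, mem_singleton]
        constructor
        · rintro ⟨-, h1, h2, h3⟩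
          obtain ⟨j, rfl⟩ := (cyc_eq_one_iff ends c x).mp h1
          rw [c.edge_ends j, Sym2.mem_iff] at h2
          rcases h2 with h2 | h2
          · right
            rw [c.vtx_inj (hi0.trans h2)]
          · left
            congr 1
            have : i0 = j + 1 := c.vtx_inj (hi0.trans h2)
            rw [this]
            ring
        · intro h
          have hloopfree : ∀ j : ZMod (c.n + 1), ends (c.edge j) ≠ s(w, w) := by
            intro j hcon
            rw [c.edge_ends j] at hcon
            rw [Sym2.eq_iff] at hcon
            have hv : c.vtx j = c.vtx (j + 1) := by
              rcases hcon with ⟨h1, h2⟩ | ⟨h1, h2⟩ <;> rw [h1, h2]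
            have := c.vtx_inj hv
            have : (1 : ZMod (c.n + 1)) = 0 := by
              have h' := congrArg (· - j) this
              simpa using h'.symm
            exact one_ne_zero_zmod c.n hn this
          rcases h with rfl | rfl
          · refine ⟨mem_univ _, cyc_edge ends c _, ?_, hloopfree _⟩
            rw [c.edge_ends (i0 - 1), sub_add_cancel, ← hi0]
            exact Sym2.mem_mk_right _ _
          · refine ⟨mem_univ _, cyc_edge ends c _, ?_, hloopfree _⟩
            rw [c.edge_ends i0, ← hi0]
            exact Sym2.mem_mk_left _ _
      rw [key, Finset.card_insert_of_notMem, Finset.card_singleton]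
      · exact even_two
      · rw [mem_singleton]
        intro hcon
        have := c.edge_inj hcon
        have h1 : (1 : ZMod (c.n + 1)) = 0 := by
          have h' := congrArg (i0 - ·) this
          simpa using h'
        exact one_ne_zero_zmod c.n hn h1
  · have hempty : (univ.filter fun x => cyc ends c x = 1 ∧ w ∈ ends x ∧ ends x ≠ s(w, w)) = ∅ := by
      ext x
      simp only [mem_filter, Finset.notMem_empty, iff_false, not_and]
      intro _ h1 h2
      obtain ⟨j, rfl⟩ := (cyc_eq_one_iff ends c _).mp h1
      exact fun _ => hw (mem_ends_of_edge ends c w j h2)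
    rw [hempty, Finset.card_empty]
    exact Even.zero


lemma exists_cycle_through (v : V) (x : E) (hv : v ∈ ends x) :
    ∀ (N : ℕ) (f : E → ZMod 2), (univ.filter fun y => f y = 1).card ≤ N →
      (∀ w, B E (vertexVec ends w) f = 0) → f x = 1 →
      ∃ c : UCycle ends, (∀ i, f (c.edge i) = 1) ∧ v ∈ Set.range c.vtx := by
  intro N
  induction N with
  | zero =>
    intro f hcard hf hx
    exfalso
    have : x ∈ univ.filter fun y => f y = 1 := by simp [hx]
    have := Finset.card_pos.mpr ⟨x, this⟩
    omega
  | succ N ih =>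
    intro f hcard hf hx
    obtain ⟨c, hc⟩ := exists_cycle ends f hf x hx
    by_cases hxc : x ∈ Set.range c.edge
    · refine ⟨c, hc, ?_⟩
      obtain ⟨i, rfl⟩ := hxc
      exact mem_ends_of_edge ends c v i hv
    · set f' := f + cyc ends c with hf'
      have hf'ker : ∀ w, B E (vertexVec ends w) f' = 0 := by
        intro w
        rw [hf', map_add, hf w, cyc_ker, add_zero]
      have hx' : f' x = 1 := by
        rw [hf', Pi.add_apply, cyc_not_edge ends c x hxc, add_zero, hx]
      have hval : ∀ y, f' y = 1 → (f y = 1 ∧ y ∉ Set.range c.edge) := by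
        intro y hy
        by_cases hyc : y ∈ Set.range c.edge
        · exfalso
          obtain ⟨i, rfl⟩ := hyc
          rw [hf', Pi.add_apply, hc i, cyc_edge] at hy
          exact absurd hy (by decide)
        · rw [hf', Pi.add_apply, cyc_not_edge ends c y hyc, add_zero] at hy
          exact ⟨hy, hyc⟩
      have hsub : (univ.filter fun y => f' y = 1) ⊂ (univ.filter fun y => f y = 1) := by
        constructor
        · intro y hy
          rw [mem_filter] at hy ⊢
          exact ⟨mem_univ _, (hval y hy.2).1⟩
        · intro hcon
          have h0 : c.edge 0 ∈ univ.filter fun y => f y = 1 := by simp [hc 0]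
          have := hcon h0
          rw [mem_filter] at this
          exact (hval _ this.2).2 ⟨0, rfl⟩
      have hcard' : (univ.filter fun y => f' y = 1).card ≤ N := by
        have := Finset.card_lt_card hsub
        omega
      obtain ⟨c', hc', hv'⟩ := ih f' hcard' hf'ker hx'
      exact ⟨c', fun i => (hval _ (hc' i)).1, hv'⟩


lemma mem_K_iff (f : E → ZMod 2) :
    f ∈ (B E).orthogonal (span (ZMod 2) (Set.range (vertexVec ends))) ↔
      ∀ w, B E (vertexVec ends w) f = 0 := by
  rw [mem_orth_span_iff]
  constructor
  · intro h w; exact h _ ⟨w, rfl⟩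
  · rintro h g ⟨w, rfl⟩; exact h w

lemma orth_sup (W1 W2 : Submodule (ZMod 2) (E → ZMod 2)) :
    (B E).orthogonal (W1 ⊔ W2) = (B E).orthogonal W1 ⊓ (B E).orthogonal W2 := by
  apply le_antisymm
  · exact le_inf (LinearMap.BilinForm.orthogonal_le le_sup_left)
      (LinearMap.BilinForm.orthogonal_le le_sup_right)
  · rintro f ⟨h1, h2⟩ n hn
    rcases Submodule.mem_sup.mp hn with ⟨a, ha, b, hb, rfl⟩
    show B E (a + b) f = 0
    rw [map_add, LinearMap.add_apply, h1 a ha, h2 b hb, add_zero]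

lemma li_of_disjoint {κ α : Type} [Fintype κ] [DecidableEq κ] (g : κ → (α → ZMod 2)) (e : κ → α)
    (h1 : ∀ i, g i (e i) = 1) (h0 : ∀ i j, i ≠ j → g j (e i) = 0) :
    LinearIndependent (ZMod 2) g := by
  rw [Fintype.linearIndependent_iff]
  intro a ha i
  have h := congrFun ha (e i)
  rw [Finset.sum_apply, Pi.zero_apply] at h
  rw [Finset.sum_eq_single i (fun j _ hj => by
    rw [Pi.smul_apply, h0 i j (Ne.symm hj), smul_zero]) (fun h => absurd (mem_univ i) h)] at h
  rw [Pi.smul_apply, h1 i, smul_eq_mul, mul_one] at h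
  exact h

end Stmt16Aux

open Stmt16Aux Module Submodule Finset in
theorem stmt16 {V E : Type} [Fintype V] [Fintype E] [DecidableEq V] [DecidableEq E]
    (ends : E → Sym2 V) :
    (uPacking ends ≤
        Fintype.card E -
          Module.finrank (ZMod 2) (Submodule.span (ZMod 2) (Set.range (vertexVec ends))) ∧
      Fintype.card E -
          Module.finrank (ZMod 2) (Submodule.span (ZMod 2) (Set.range (vertexVec ends))) ≤
        uCutNumber ends) ∧
    (Module.finrank (ZMod 2) (Submodule.span (ZMod 2) (Set.range (vertexVec ends))) <
        Fintype.card E ↔ Nonempty (UCycle ends)) ∧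
    ∀ v : V,
      (uPackingAt ends v ≤
          (Finset.univ.filter fun x : E => v ∈ ends x).card -
            Module.finrank (ZMod 2)
              ↥((Submodule.span (ZMod 2)
                  {f : E → ZMod 2 | ∃ x : E, v ∈ ends x ∧ f = Pi.single x (1 : ZMod 2)}) ⊓
                Submodule.span (ZMod 2) (Set.range (vertexVec ends))) ∧
        (Finset.univ.filter fun x : E => v ∈ ends x).card -
            Module.finrank (ZMod 2)
              ↥((Submodule.span (ZMod 2)
                  {f : E → ZMod 2 | ∃ x : E, v ∈ ends x ∧ f = Pi.single x (1 : ZMod 2)}) ⊓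
                Submodule.span (ZMod 2) (Set.range (vertexVec ends))) ≤
          uCutNumberAt ends v) ∧
      (Module.finrank (ZMod 2)
            ↥((Submodule.span (ZMod 2)
                {f : E → ZMod 2 | ∃ x : E, v ∈ ends x ∧ f = Pi.single x (1 : ZMod 2)}) ⊓
              Submodule.span (ZMod 2) (Set.range (vertexVec ends))) <
          (Finset.univ.filter fun x : E => v ∈ ends x).card ↔
        ∃ c : UCycle ends, v ∈ Set.range c.vtx) := by
  classical
  set S := Submodule.span (ZMod 2) (Set.range (vertexVec ends)) with hSdef
  set K := (B E).orthogonal S with hKdef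
  have hfinK : finrank (ZMod 2) K = Fintype.card E - finrank (ZMod 2) S := by
    rw [hKdef, LinearMap.BilinForm.finrank_orthogonal B_nondegen,
      Module.finrank_fintype_fun_eq_card]
  have hSle : finrank (ZMod 2) S ≤ Fintype.card E := by
    have := Submodule.finrank_le S
    rwa [Module.finrank_fintype_fun_eq_card] at this
  have packing_le : ∀ (k : ℕ) (g : Fin k → UCycle ends),
      (∀ i j, i ≠ j → Disjoint (Set.range (g i).edge) (Set.range (g j).edge)) →
      k ≤ finrank (ZMod 2) K := by
    intro k g hdis
    have hmem : ∀ i, cyc ends (g i) ∈ K := fun i => (mem_K_iff ends _).mpr (cyc_ker ends (g i))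
    have hli : LinearIndependent (ZMod 2) (fun i => cyc ends (g i)) := by
      apply li_of_disjoint _ (fun i => (g i).edge 0)
      · intro i; exact cyc_edge ends (g i) 0
      · intro i j hij
        apply cyc_not_edge
        exact fun hcon => (Set.disjoint_left.mp (hdis i j hij)) ⟨0, rfl⟩ hcon
    have hliK : LinearIndependent (ZMod 2) (fun i => (⟨cyc ends (g i), hmem i⟩ : K)) :=
      LinearIndependent.of_comp K.subtype hli
    simpa using hliK.fintype_card_le_finrank
  refine ⟨⟨?_, ?_⟩, ?_, ?_⟩
  · -- uPacking bound
    unfold uPacking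
    apply csSup_le
    · exact ⟨0, Fin.elim0, fun i => i.elim0⟩
    · rintro k ⟨g, hdis⟩
      rw [← hfinK]
      exact packing_le k g hdis
  · -- uCutNumber bound
    rw [← hfinK]
    unfold uCutNumber
    apply le_csInf
    · exact ⟨Finset.univ.card, Finset.univ, rfl, fun c => ⟨c.edge 0, mem_univ _, 0, rfl⟩⟩
    rintro b ⟨T, hTcard, hTcut⟩
    let ρ : (E → ZMod 2) →ₗ[ZMod 2] ({y // y ∈ T} → ZMod 2) :=
      LinearMap.funLeft (ZMod 2) (ZMod 2) Subtype.val
    have hinj : Function.Injective (ρ ∘ₗ K.subtype) := by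
      rw [← LinearMap.ker_eq_bot, LinearMap.ker_eq_bot']
      rintro ⟨f, hfK⟩ h0
      apply Subtype.ext
      show f = 0
      by_contra hne
      obtain ⟨x, hx⟩ := Function.ne_iff.mp hne
      obtain ⟨c, hc⟩ := exists_cycle ends f ((mem_K_iff ends f).mp hfK) x (z2one _ hx)
      obtain ⟨y, hyT, i, hyi⟩ := hTcut c
      have h1 : f y = 1 := by rw [← hyi]; exact hc i
      have h2 : f y = 0 := congrFun h0 ⟨y, hyT⟩
      rw [h1] at h2
      exact absurd h2 (by decide)
    calc finrank (ZMod 2) K ≤ finrank (ZMod 2) ({y // y ∈ T} → ZMod 2) :=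
          LinearMap.finrank_le_finrank_of_injective hinj
      _ = T.card := by rw [Module.finrank_fintype_fun_eq_card, Fintype.card_coe]
      _ ≤ b := le_of_eq hTcard
  · -- iff for cycles
    constructor
    · intro hlt
      have hKpos : 0 < finrank (ZMod 2) K := by omega
      have hKne : K ≠ ⊥ := by
        intro hbot
        rw [hbot, finrank_bot] at hKpos
        omega
      obtain ⟨f, hfK, hf0⟩ := Submodule.exists_mem_ne_zero_of_ne_bot hKne
      obtain ⟨x, hx⟩ := Function.ne_iff.mp hf0
      obtain ⟨c, -⟩ := exists_cycle ends f ((mem_K_iff ends f).mp hfK) x (z2one _ hx)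
      exact ⟨c⟩
    · rintro ⟨c⟩
      have hmem : cyc ends c ∈ K := (mem_K_iff ends _).mpr (cyc_ker ends c)
      have hne : cyc ends c ≠ 0 := by
        intro h
        have h1 := congrFun h (c.edge 0)
        rw [cyc_edge, Pi.zero_apply] at h1
        exact absurd h1 (by decide)
      have hKne : K ≠ ⊥ := fun hbot => hne (by rwa [hbot, Submodule.mem_bot] at hmem)
      have : finrank (ZMod 2) K ≠ 0 := fun h => hKne (Submodule.finrank_eq_zero.mp h)
      omega
  · -- local statements
    intro v
    set P := Submodule.span (ZMod 2)
      {f : E → ZMod 2 | ∃ x : E, v ∈ ends x ∧ f = Pi.single x (1 : ZMod 2)} with hPdef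
    set d := (Finset.univ.filter fun x : E => v ∈ ends x).card with hddef
    -- the subtype of edges at v
    have hset : {f : E → ZMod 2 | ∃ x : E, v ∈ ends x ∧ f = Pi.single x (1 : ZMod 2)} =
        Set.range (fun x : {x : E // v ∈ ends x} => Pi.single x.val (1 : ZMod 2)) := by
      ext f
      constructor
      · rintro ⟨x, hx, rfl⟩; exact ⟨⟨x, hx⟩, rfl⟩
      · rintro ⟨⟨x, hx⟩, rfl⟩; exact ⟨x, hx, rfl⟩
    have hli_single : LinearIndependent (ZMod 2)
        (fun x : {x : E // v ∈ ends x} => (Pi.single x.val 1 : E → ZMod 2)) := by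
      apply li_of_disjoint _ (fun x => x.val)
      · intro i; rw [Pi.single_eq_same]
      · intro i j hij
        rw [Pi.single_eq_of_ne]
        exact fun h => hij (Subtype.ext h)
    have hPd : finrank (ZMod 2) P = d := by
      rw [hPdef, hset, finrank_span_eq_card hli_single, Fintype.card_subtype]
    set Q := (B E).orthogonal P with hQdef
    have hQmem : ∀ f : E → ZMod 2, f ∈ Q ↔ ∀ x : E, v ∈ ends x → f x = 0 := by
      intro f
      rw [hQdef, hPdef, mem_orth_span_iff]
      constructor
      · intro h x hx
        have := h (Pi.single x 1) ⟨x, hx, rfl⟩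
        rwa [B_single'] at this
      · rintro h g ⟨x, hx, rfl⟩
        rw [B_single']
        exact h x hx
    let ρ : (E → ZMod 2) →ₗ[ZMod 2] ({x : E // v ∈ ends x} → ZMod 2) :=
      LinearMap.funLeft (ZMod 2) (ZMod 2) Subtype.val
    have hkerρ : LinearMap.ker ρ = Q := by
      ext f
      rw [LinearMap.mem_ker, hQmem]
      constructor
      · intro h x hx
        exact congrFun h ⟨x, hx⟩
      · intro h
        funext x
        exact h x.val x.property
    set N := Submodule.map ρ K with hNdef
    -- rank-nullity for ρ restricted to K
    have hrn : finrank (ZMod 2) N + finrank (ZMod 2) ↥(K ⊓ Q) = finrank (ZMod 2) K := by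
      have h1 := LinearMap.finrank_range_add_finrank_ker (ρ ∘ₗ K.subtype)
      have h2 : LinearMap.range (ρ ∘ₗ K.subtype) = N := by
        rw [LinearMap.range_comp, Submodule.range_subtype]
      have h3 : LinearMap.ker (ρ ∘ₗ K.subtype) = Submodule.comap K.subtype (K ⊓ Q) := by
        rw [LinearMap.ker_comp, hkerρ]
        ext ⟨x, hx⟩
        simp [hx]
      have h4 : finrank (ZMod 2) (LinearMap.ker (ρ ∘ₗ K.subtype)) =
          finrank (ZMod 2) ↥(K ⊓ Q) := by
        rw [h3]
        exact (Submodule.comapSubtypeEquivOfLe inf_le_left).finrank_eq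
      rw [h2, h4] at h1
      exact h1
    have hKQ : finrank (ZMod 2) ↥(K ⊓ Q) = Fintype.card E - finrank (ZMod 2) ↥(S ⊔ P) := by
      rw [hKdef, hQdef, ← orth_sup, LinearMap.BilinForm.finrank_orthogonal B_nondegen,
        Module.finrank_fintype_fun_eq_card]
    have hsup : finrank (ZMod 2) ↥(S ⊔ P) + finrank (ZMod 2) ↥(S ⊓ P) =
        finrank (ZMod 2) S + finrank (ZMod 2) P := Submodule.finrank_sup_add_finrank_inf_eq S P
    have hsuple : finrank (ZMod 2) ↥(S ⊔ P) ≤ Fintype.card E := by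
      have := Submodule.finrank_le (S ⊔ P)
      rwa [Module.finrank_fintype_fun_eq_card] at this
    have hcomm : P ⊓ S = S ⊓ P := inf_comm P S
    have hN : finrank (ZMod 2) N = d - finrank (ZMod 2) ↥(P ⊓ S) ∧
        finrank (ZMod 2) ↥(P ⊓ S) ≤ d := by
      rw [hcomm]
      omega
    refine ⟨⟨?_, ?_⟩, ?_⟩
    · -- uPackingAt bound
      unfold uPackingAt
      apply csSup_le
      · exact ⟨0, Fin.elim0, fun i => i.elim0, fun i j _ => i.elim0⟩
      · rintro k ⟨g, hthrough, hdis⟩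
        rw [← hN.1]
        choose t ht using fun i => hthrough i
        have he : ∀ i, v ∈ ends ((g i).edge (t i)) := by
          intro i
          rw [(g i).edge_ends (t i), ← ht i]
          exact Sym2.mem_mk_left _ _
        have hmem : ∀ i, ρ (cyc ends (g i)) ∈ N := fun i =>
          Submodule.mem_map_of_mem ((mem_K_iff ends _).mpr (cyc_ker ends (g i)))
        have hli : LinearIndependent (ZMod 2) (fun i => ρ (cyc ends (g i))) := by
          apply li_of_disjoint _ (fun i => (⟨(g i).edge (t i), he i⟩ : {x : E // v ∈ ends x}))
          · intro i
            exact cyc_edge ends (g i) (t i)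
          · intro i j hij
            apply cyc_not_edge
            exact fun hcon => (Set.disjoint_left.mp (hdis i j hij)) ⟨t i, rfl⟩ hcon
        have hliN : LinearIndependent (ZMod 2) (fun i => (⟨ρ (cyc ends (g i)), hmem i⟩ : N)) :=
          LinearIndependent.of_comp N.subtype hli
        simpa using hliN.fintype_card_le_finrank
    · -- uCutNumberAt bound
      rw [← hN.1]
      unfold uCutNumberAt
      apply le_csInf
      · refine ⟨d, Finset.univ.filter fun x : E => v ∈ ends x,
          fun x hx => (mem_filter.mp hx).2, rfl, ?_⟩
        rintro c ⟨i, hi⟩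
        refine ⟨c.edge i, ?_, i, rfl⟩
        rw [mem_filter]
        refine ⟨mem_univ _, ?_⟩
        rw [c.edge_ends i, ← hi]
        exact Sym2.mem_mk_left _ _
      rintro b ⟨T, hTv, hTcard, hTcut⟩
      let σ : ({x : E // v ∈ ends x} → ZMod 2) →ₗ[ZMod 2] ({y // y ∈ T} → ZMod 2) :=
        LinearMap.funLeft (ZMod 2) (ZMod 2)
          (fun t : {y // y ∈ T} => (⟨t.val, hTv t.val t.property⟩ : {x : E // v ∈ ends x}))
      have hinj : Function.Injective (σ ∘ₗ N.subtype) := by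
        rw [← LinearMap.ker_eq_bot, LinearMap.ker_eq_bot']
        rintro ⟨gN, hgN⟩ h0
        obtain ⟨f, hfK, rfl⟩ := hgN
        apply Subtype.ext
        show ρ f = 0
        funext x
        rw [Pi.zero_apply]
        by_contra hne
        have hfx : f x.val = 1 := z2one _ hne
        obtain ⟨c, hc, hvc⟩ := exists_cycle_through ends v x.val x.property
          (Finset.univ.filter fun y => f y = 1).card f le_rfl ((mem_K_iff ends f).mp hfK) hfx
        obtain ⟨y, hyT, i, hyi⟩ := hTcut c hvc
        have h1 : f y = 1 := by rw [← hyi]; exact hc i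
        have h2 : f y = 0 := congrFun h0 ⟨y, hyT⟩
        rw [h1] at h2
        exact absurd h2 (by decide)
      calc finrank (ZMod 2) N ≤ finrank (ZMod 2) ({y // y ∈ T} → ZMod 2) :=
            LinearMap.finrank_le_finrank_of_injective hinj
        _ = T.card := by rw [Module.finrank_fintype_fun_eq_card, Fintype.card_coe]
        _ ≤ b := le_of_eq hTcard
    · -- local iff
      constructor
      · intro hlt
        have hNpos : 0 < finrank (ZMod 2) N := by omega
        have hNne : N ≠ ⊥ := by
          intro hbot
          rw [hbot, finrank_bot] at hNpos
          omega
        obtain ⟨gN, hgN, hg0⟩ := Submodule.exists_mem_ne_zero_of_ne_bot hNne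
        obtain ⟨f, hfK, rfl⟩ := hgN
        obtain ⟨x, hx⟩ := Function.ne_iff.mp hg0
        have hfx : f x.val = 1 := z2one _ hx
        obtain ⟨c, -, hvc⟩ := exists_cycle_through ends v x.val x.property
          (Finset.univ.filter fun y => f y = 1).card f le_rfl ((mem_K_iff ends f).mp hfK) hfx
        exact ⟨c, hvc⟩
      · rintro ⟨c, i, hi⟩
        have hmem : ρ (cyc ends c) ∈ N :=
          Submodule.mem_map_of_mem ((mem_K_iff ends _).mpr (cyc_ker ends c))
        have hx : v ∈ ends (c.edge i) := by
          rw [c.edge_ends i, ← hi]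
          exact Sym2.mem_mk_left _ _
        have hne : ρ (cyc ends c) ≠ 0 := by
          intro h
          have h1 := congrFun h (⟨c.edge i, hx⟩ : {x : E // v ∈ ends x})
          rw [Pi.zero_apply] at h1
          have h2 : cyc ends c (c.edge i) = 0 := h1
          rw [cyc_edge] at h2
          exact absurd h2 (by decide)
        have hNne : N ≠ ⊥ := fun hbot => hne (by rwa [hbot, Submodule.mem_bot] at hmem)
        have : finrank (ZMod 2) N ≠ 0 := fun h => hNne (Submodule.finrank_eq_zero.mp h)
        omega
end

section
/- Let G be an undirected graph with finite vertex set V(G) and finite edge set E(G), and let S be the ℤ₂-subspace of ℤ₂·E(G) spanned by the vectors Σ_{x ∈ E(v)∖L(v)} x for v ∈ V(G). For an edge x of G, there exists an undirected cycle in G containing x if and only if x ∉ S (where x is regarded as a basis vector of ℤ₂·E(G)). -/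
open MvPolynomial

/-! ### Auxiliary lemmas -/

lemma exists_sym2_rep {V : Type} (z : Sym2 V) : ∃ a b, z = s(a, b) := by
  induction z using Sym2.ind with
  | _ a b => exact ⟨a, b, rfl⟩

/-- Each vertex vector sums to zero along a cycle. -/
lemma cycle_sum_zero {V E : Type} [DecidableEq V] (ends : E → Sym2 V) (n : ℕ)
    (vtx : ZMod (n + 1) → V) (edge : ZMod (n + 1) → E)
    (vinj : Function.Injective vtx)
    (hends : ∀ i, ends (edge i) = s(vtx i, vtx (i + 1))) (v : V) :
    ∑ i : ZMod (n + 1), vertexVec ends v (edge i) = 0 := by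
  match n with
  | 0 =>
    refine Finset.sum_eq_zero fun i _ => ?_
    haveI : Subsingleton (ZMod (0 + 1)) := by
      constructor; intro a b; exact Subsingleton.elim (α := Fin 1) a b
    have h1 : (i + 1 : ZMod (0 + 1)) = i := Subsingleton.elim _ _
    simp only [vertexVec, hends i, h1, ite_eq_right_iff]
    rintro ⟨hm, hne⟩
    rcases Sym2.mem_iff.1 hm with h | h <;> exact absurd (by rw [h]) hne
  | (k + 1) =>
    have hterm : ∀ i : ZMod (k + 1 + 1), vertexVec ends v (edge i) =
        (if vtx i = v then 1 else 0) + (if vtx (i + 1) = v then (1 : ZMod 2) else 0) := by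
      intro i
      have hne : vtx i ≠ vtx (i + 1) := by
        intro h
        have hi : i = i + 1 := vinj h
        haveI : Fact (1 < k + 1 + 1) := ⟨by omega⟩
        have : (1 : ZMod (k + 1 + 1)) = 0 := (left_eq_add (a := i)).1 hi
        exact one_ne_zero this
      have hnotloop : s(vtx i, vtx (i + 1)) ≠ s(v, v) := by
        intro h
        rcases Sym2.eq_iff.1 h with ⟨h1, h2⟩ | ⟨h1, h2⟩ <;>
          exact hne (h1.trans h2.symm)
      simp only [vertexVec, hends i, Sym2.mem_iff]
      by_cases h1 : vtx i = v
      · have h2 : vtx (i + 1) ≠ v := fun h => hne (h1.trans h.symm)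
        simp [h1, h2, hnotloop]
      · by_cases h2 : vtx (i + 1) = v
        · simp [h1, h2, hnotloop]
        · have : ¬(v = vtx i ∨ v = vtx (i + 1)) := by
            rintro (h | h)
            · exact h1 h.symm
            · exact h2 h.symm
          simp [h1, h2, this]
    rw [Finset.sum_congr rfl fun i _ => hterm i, Finset.sum_add_distrib]
    have hre : ∑ i : ZMod (k + 1 + 1), (if vtx (i + 1) = v then (1 : ZMod 2) else 0) =
        ∑ i : ZMod (k + 1 + 1), (if vtx i = v then (1 : ZMod 2) else 0) :=
      Fintype.sum_equiv (Equiv.addRight (1 : ZMod (k + 1 + 1))) _ _ (fun i => rfl)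
    rw [hre]
    exact CharTwo.add_self_eq_zero _

/-- Build a cycle from data indexed by natural numbers. -/
def buildUC {V E : Type} (ends : E → Sym2 V) (m : ℕ) (f : ℕ → V) (g : ℕ → E)
    (hf : ∀ i j, i ≤ m → j ≤ m → f i = f j → i = j)
    (hg : ∀ i j, i ≤ m → j ≤ m → g i = g j → i = j)
    (he1 : ∀ i, i < m → ends (g i) = s(f i, f (i + 1)))
    (he2 : ends (g m) = s(f m, f 0)) : UCycle ends where
  n := m
  vtx := fun i => f i.val
  edge := fun i => g i.val
  vtx_inj := by
    intro i j h
    have hi : i.val < m + 1 := ZMod.val_lt i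
    have hj : j.val < m + 1 := ZMod.val_lt j
    have := hf i.val j.val (by omega) (by omega) h
    exact ZMod.val_injective _ this
  edge_inj := by
    intro i j h
    have hi : i.val < m + 1 := ZMod.val_lt i
    have hj : j.val < m + 1 := ZMod.val_lt j
    have := hg i.val j.val (by omega) (by omega) h
    exact ZMod.val_injective _ this
  edge_ends := by
    intro i
    have hi : i.val < m + 1 := ZMod.val_lt i
    have hval : (i + 1 : ZMod (m + 1)).val = (i.val + 1) % (m + 1) := by
      rw [ZMod.val_add, ZMod.val_one_eq_one_mod]
      conv_rhs => rw [Nat.add_mod]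
      rw [Nat.mod_eq_of_lt hi]
    show ends (g i.val) = s(f i.val, f (i + 1 : ZMod (m + 1)).val)
    by_cases h : i.val = m
    · rw [hval, h]
      simp only [Nat.mod_self]
      exact he2
    · have hlt : i.val < m := by omega
      rw [hval, Nat.mod_eq_of_lt (by omega)]
      exact he1 _ hlt

lemma path_getVert_inj {V : Type} {G : SimpleGraph V} :
    ∀ {u v : V} (p : G.Walk u v), p.IsPath →
      ∀ i j, i ≤ p.length → j ≤ p.length → p.getVert i = p.getVert j → i = j := by
  intro u v p
  induction p with
  | nil =>
    intro _ i j hi hj _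
    simp only [SimpleGraph.Walk.length_nil, Nat.le_zero] at hi hj
    omega
  | @cons u v w h q ih =>
    intro hp i j hi hj heq
    rw [SimpleGraph.Walk.length_cons] at hi hj
    have hp' := (SimpleGraph.Walk.cons_isPath_iff h q).1 hp
    match i, j with
    | 0, 0 => rfl
    | 0, j + 1 =>
      exfalso
      apply hp'.2
      rw [SimpleGraph.Walk.mem_support_iff_exists_getVert]
      refine ⟨j, ?_, by omega⟩
      rw [← SimpleGraph.Walk.getVert_cons_succ q h, ← heq, SimpleGraph.Walk.getVert_zero]
    | i + 1, 0 =>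
      exfalso
      apply hp'.2
      rw [SimpleGraph.Walk.mem_support_iff_exists_getVert]
      refine ⟨i, ?_, by omega⟩
      rw [← SimpleGraph.Walk.getVert_cons_succ q h, heq, SimpleGraph.Walk.getVert_zero]
    | i + 1, j + 1 =>
      have := ih hp'.1 i j (by omega) (by omega)
        (by rwa [SimpleGraph.Walk.getVert_cons_succ, SimpleGraph.Walk.getVert_cons_succ] at heq)
      omega

lemma exists_cycle_of_reachable {V E : Type} (ends : E → Sym2 V) (x : E) {H : SimpleGraph V}
    (hH : ∀ c d : V, H.Adj c d → ∃ y, y ≠ x ∧ ends y = s(c, d)) {a b : V}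
    (hx : ends x = s(a, b)) (h : H.Reachable a b) :
    ∃ c : UCycle ends, x ∈ Set.range c.edge := by
  classical
  obtain ⟨w⟩ := h
  obtain ⟨q, hp⟩ := w.toPath
  set m := q.length with hm
  have hadj : ∀ i, i < m → ∃ y, y ≠ x ∧ ends y = s(q.getVert i, q.getVert (i + 1)) :=
    fun i hi => hH _ _ (q.adj_getVert_succ hi)
  choose g0 hg0 hg0e using hadj
  set g : ℕ → E := fun i => if h : i < m then g0 i h else x with hgdef
  have hf : ∀ i j, i ≤ m → j ≤ m → q.getVert i = q.getVert j → i = j :=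
    path_getVert_inj q hp
  have hg : ∀ i j, i ≤ m → j ≤ m → g i = g j → i = j := by
    intro i j hi hj he
    by_cases h1 : i < m <;> by_cases h2 : j < m
    · rw [hgdef] at he
      simp only [dif_pos h1, dif_pos h2] at he
      have := (hg0e i h1).symm.trans (congrArg ends he |>.trans (hg0e j h2))
      rcases Sym2.eq_iff.1 this with ⟨e1, e2⟩ | ⟨e1, e2⟩
      · exact hf i j (by omega) (by omega) e1
      · have := hf i (j + 1) (by omega) (by omega) e1
        have := hf (i + 1) j (by omega) (by omega) e2
        omega
    · exfalso
      rw [hgdef] at he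
      simp only [dif_pos h1, dif_neg h2] at he
      exact hg0 i h1 he
    · exfalso
      rw [hgdef] at he
      simp only [dif_neg h1, dif_pos h2] at he
      exact hg0 j h2 he.symm
    · omega
  have he1 : ∀ i, i < m → ends (g i) = s(q.getVert i, q.getVert (i + 1)) := by
    intro i hi
    rw [hgdef]
    simp only [dif_pos hi]
    exact hg0e i hi
  have he2 : ends (g m) = s(q.getVert m, q.getVert 0) := by
    rw [hgdef]
    simp only [dif_neg (lt_irrefl m)]
    rw [SimpleGraph.Walk.getVert_zero, hm, SimpleGraph.Walk.getVert_length, hx]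
    exact Sym2.eq_swap
  refine ⟨buildUC ends m (fun i => q.getVert i) g hf hg he1 he2, ⟨(m : ZMod (m + 1)), ?_⟩⟩
  show g ((m : ZMod (m + 1)).val) = x
  rw [ZMod.val_natCast, Nat.mod_eq_of_lt (by omega), hgdef]
  simp

theorem stmt17 {V E : Type} [Fintype V] [Fintype E] [DecidableEq V] [DecidableEq E]
    (ends : E → Sym2 V) (x : E) :
    (∃ c : UCycle ends, x ∈ Set.range c.edge) ↔
      Pi.single x (1 : ZMod 2) ∉ Submodule.span (ZMod 2) (Set.range (vertexVec ends)) := by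
  classical
  constructor
  · rintro ⟨c, j, hj⟩ hmem
    have hzero : ∑ i : ZMod (c.n + 1), (Pi.single x (1 : ZMod 2) : E → ZMod 2) (c.edge i) = (0 : ZMod 2) := by
      refine Submodule.span_induction
        (p := fun (f : E → ZMod 2) _ => ∑ i : ZMod (c.n + 1), f (c.edge i) = 0) ?_ ?_ ?_ ?_ hmem
      · rintro f ⟨v, rfl⟩
        exact cycle_sum_zero ends c.n c.vtx c.edge c.vtx_inj c.edge_ends v
      · simp
      · intro f g _ _ hf hg
        simp only [Pi.add_apply, Finset.sum_add_distrib, hf, hg, add_zero]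
      · intro r f _ hf
        simp only [Pi.smul_apply, smul_eq_mul, ← Finset.mul_sum, hf, mul_zero]
    have hone : ∑ i : ZMod (c.n + 1), (Pi.single x (1 : ZMod 2) : E → ZMod 2) (c.edge i) = (1 : ZMod 2) := by
      have hterm : ∀ i : ZMod (c.n + 1),
          (Pi.single x (1 : ZMod 2) : E → ZMod 2) (c.edge i) = if i = j then 1 else 0 := by
        intro i
        rw [Pi.single_apply]
        by_cases h : i = j
        · rw [if_pos h, if_pos (by rw [h, hj])]
        · rw [if_neg h, if_neg (fun he => h (c.edge_inj (he.trans hj.symm)))]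
      rw [Finset.sum_congr rfl fun i _ => hterm i,
        Finset.sum_ite_eq' Finset.univ j fun _ => (1 : ZMod 2)]
      simp
    rw [hzero] at hone
    exact one_ne_zero hone.symm
  · intro hmem
    by_contra hc
    apply hmem
    obtain ⟨a, b, hx⟩ := exists_sym2_rep (ends x)
    have hab : a ≠ b := by
      rintro rfl
      refine hc ⟨⟨0, fun _ => a, fun _ => x, ?_, ?_, fun i => hx⟩, ⟨0, rfl⟩⟩ <;>
      · intro i j _
        exact Subsingleton.elim (α := Fin 1) i j
    set H : SimpleGraph V :=
      { Adj := fun c d => c ≠ d ∧ ∃ y, y ≠ x ∧ ends y = s(c, d)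
        symm := ⟨by
          rintro c d ⟨hne, y, hy, he⟩
          exact ⟨hne.symm, y, hy, he.trans Sym2.eq_swap⟩⟩
        loopless := ⟨fun v h => h.1 rfl⟩ } with hH
    have hHadj : ∀ c d : V, H.Adj c d ↔ (c ≠ d ∧ ∃ y, y ≠ x ∧ ends y = s(c, d)) :=
      fun c d => Iff.rfl
    have hreach : ¬ H.Reachable a b :=
      fun hr => hc (exists_cycle_of_reachable ends x (fun c d h => ((hHadj c d).1 h).2) hx hr)
    have hsum : ∑ v ∈ Finset.univ.filter (fun v => H.Reachable a v), vertexVec ends v =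
        Pi.single x (1 : ZMod 2) := by
      funext y
      rw [Finset.sum_apply]
      obtain ⟨c, d, hy⟩ := exists_sym2_rep (ends y)
      by_cases hcd : c = d
      · subst hcd
        have hyx : y ≠ x := by
          rintro rfl
          rw [hx] at hy
          rcases Sym2.eq_iff.1 hy with ⟨h1, h2⟩ | ⟨h1, h2⟩ <;> exact hab (h1.trans h2.symm)
        rw [Finset.sum_eq_zero, Pi.single_eq_of_ne hyx]
        intro v _
        simp only [vertexVec, hy, Sym2.mem_iff, or_self, ite_eq_right_iff]
        rintro ⟨rfl, hne⟩
        exact absurd rfl hne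
      · have hterm : ∀ v : V, vertexVec ends v y =
            (if v = c then 1 else 0) + (if v = d then (1 : ZMod 2) else 0) := by
          intro v
          have hnl : s(c, d) ≠ s(v, v) := by
            intro h
            rcases Sym2.eq_iff.1 h with ⟨h1, h2⟩ | ⟨h1, h2⟩ <;> exact hcd (h1.trans h2.symm)
          simp only [vertexVec, hy, Sym2.mem_iff, ne_eq, hnl, not_false_iff, and_true]
          by_cases h1 : v = c
          · have h2 : v ≠ d := fun h => hcd (h1.symm.trans h)
            simp [h1, h2, hcd]
          · by_cases h2 : v = d
            · have hdc : ¬ d = c := fun h => hcd h.symm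
              simp [h1, h2, hdc]
            · simp [h1, h2]
        rw [Finset.sum_congr rfl fun v _ => hterm v, Finset.sum_add_distrib,
          Finset.sum_ite_eq' _ c fun _ => (1 : ZMod 2),
          Finset.sum_ite_eq' _ d fun _ => (1 : ZMod 2)]
        simp only [Finset.mem_filter, Finset.mem_univ, true_and]
        by_cases hyx : y = x
        · subst hyx
          have heq := Sym2.eq_iff.1 (hx.symm.trans hy)
          have haT : H.Reachable a a := SimpleGraph.Reachable.refl a
          rw [Pi.single_eq_same]
          rcases heq with ⟨h1, h2⟩ | ⟨h1, h2⟩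
          · subst h1; subst h2
            rw [if_pos haT, if_neg hreach, add_zero]
          · subst h1; subst h2
            rw [if_neg hreach, if_pos haT, zero_add]
        · have hadj : H.Adj c d := (hHadj c d).2 ⟨hcd, y, hyx, hy⟩
          have hiff : H.Reachable a c ↔ H.Reachable a d :=
            ⟨fun h => h.trans hadj.reachable, fun h => h.trans hadj.symm.reachable⟩
          rw [Pi.single_eq_of_ne hyx]
          by_cases hcT : H.Reachable a c
          · rw [if_pos hcT, if_pos (hiff.1 hcT)]
            decide
          · rw [if_neg hcT, if_neg (fun h => hcT (hiff.2 h))]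
            simp
    rw [← hsum]
    exact Submodule.sum_mem _ fun v _ => Submodule.subset_span ⟨v, rfl⟩
end

section
/- Let X, Y and Z be three pairwise disjoint finite sets of variables. Then the sets Δ = {e_l(X ∪ Z) − e_l(Y ∪ Z) | l ≥ 1} and Δ' = {e_l(X) − e_l(Y) | l ≥ 1} generate the same ideal of the polynomial ring ℤ[X ∪ Y ∪ Z]. -/
open MvPolynomial

/-- The `l`-th elementary symmetric polynomial in the finite set `s` of variables
(`1` for `l = 0`, `0` for `l > |s|`). -/
noncomputable def esymmOf (R : Type) [CommRing R] {E : Type} (s : Finset E) (l : ℕ) :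
    MvPolynomial E R :=
  ∑ t ∈ s.powersetCard l, ∏ x ∈ t, X x


lemma esymmOf_zero (R : Type) [CommRing R] {E : Type} (s : Finset E) :
    esymmOf R s 0 = 1 := by
  simp [esymmOf]

lemma esymmOf_union {R : Type} [CommRing R] {E : Type} [DecidableEq E] {s t : Finset E}
    (h : Disjoint s t) (l : ℕ) :
    esymmOf R (s ∪ t) l = ∑ i ∈ Finset.range (l + 1), esymmOf R s i * esymmOf R t (l - i) := by
  classical
  have : ∑ i ∈ Finset.range (l + 1), esymmOf R s i * esymmOf R t (l - i)
      = ∑ p ∈ (Finset.range (l + 1)).sigma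
          (fun i => s.powersetCard i ×ˢ t.powersetCard (l - i)),
          (∏ x ∈ p.2.1, (X x : MvPolynomial E R)) * ∏ x ∈ p.2.2, X x := by
    rw [Finset.sum_sigma]
    exact Finset.sum_congr rfl fun i _ => by
      rw [esymmOf, esymmOf, Finset.sum_mul_sum, Finset.sum_product]
  rw [this, esymmOf]
  refine Finset.sum_nbij' (fun u => ⟨(u ∩ s).card, (u ∩ s, u ∩ t)⟩)
    (fun p => p.2.1 ∪ p.2.2) ?_ ?_ ?_ ?_ ?_
  · intro u hu
    rw [Finset.mem_powersetCard] at hu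
    obtain ⟨hsub, hcard⟩ := hu
    have hdisj : Disjoint (u ∩ s) (u ∩ t) :=
      h.mono (Finset.inter_subset_right) (Finset.inter_subset_right)
    have hun : (u ∩ s) ∪ (u ∩ t) = u := by
      rw [← Finset.inter_union_distrib_left, Finset.inter_eq_left.mpr hsub]
    have hcards : (u ∩ s).card + (u ∩ t).card = l := by
      rw [← Finset.card_union_of_disjoint hdisj, hun, hcard]
    simp only [Finset.mem_sigma, Finset.mem_range, Finset.mem_product, Finset.mem_powersetCard]
    exact ⟨by omega, ⟨Finset.inter_subset_right, trivial⟩, Finset.inter_subset_right, by omega⟩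
  · intro p hp
    simp only [Finset.mem_sigma, Finset.mem_range, Finset.mem_product,
      Finset.mem_powersetCard] at hp ⊢
    obtain ⟨hi, ⟨has, hac⟩, ⟨hbt, hbc⟩⟩ := hp
    have hdisj : Disjoint p.2.1 p.2.2 := h.mono has hbt
    constructor
    · exact Finset.union_subset (has.trans Finset.subset_union_left)
        (hbt.trans Finset.subset_union_right)
    · rw [Finset.card_union_of_disjoint hdisj, hac, hbc]; omega
  · intro u hu
    rw [Finset.mem_powersetCard] at hu
    show (u ∩ s) ∪ (u ∩ t) = u
    rw [← Finset.inter_union_distrib_left, Finset.inter_eq_left.mpr hu.1]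
  · rintro ⟨i, a, b⟩ hp
    simp only [Finset.mem_sigma, Finset.mem_range, Finset.mem_product,
      Finset.mem_powersetCard] at hp
    obtain ⟨hi, ⟨has, hac⟩, ⟨hbt, hbc⟩⟩ := hp
    have ha : (a ∪ b) ∩ s = a := by
      rw [Finset.union_inter_distrib_right, Finset.inter_eq_left.mpr has,
        Finset.disjoint_iff_inter_eq_empty.mp (h.symm.mono_left hbt), Finset.union_empty]
    have hb : (a ∪ b) ∩ t = b := by
      rw [Finset.union_inter_distrib_right, Finset.inter_eq_left.mpr hbt,
        Finset.disjoint_iff_inter_eq_empty.mp (h.mono_left has), Finset.empty_union]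
    simp [ha, hb, hac]
  · intro u hu
    rw [Finset.mem_powersetCard] at hu
    have hdisj : Disjoint (u ∩ s) (u ∩ t) :=
      h.mono (Finset.inter_subset_right) (Finset.inter_subset_right)
    rw [← Finset.prod_union hdisj, ← Finset.inter_union_distrib_left,
      Finset.inter_eq_left.mpr hu.1]

lemma span_eq_aux {R : Type} [CommRing R] (e f c : ℕ → R)
    (hf0 : f 0 = 0) (hc0 : c 0 = 1)
    (he : ∀ l, e l = ∑ i ∈ Finset.range (l + 1), f i * c (l - i)) :
    Ideal.span {p : R | ∃ l : ℕ, 1 ≤ l ∧ p = e l} =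
      Ideal.span {p : R | ∃ l : ℕ, 1 ≤ l ∧ p = f l} := by
  have hfmem : ∀ l, f l ∈ Ideal.span {p : R | ∃ l : ℕ, 1 ≤ l ∧ p = e l} := by
    intro l
    induction l using Nat.strong_induction_on with
    | _ l ih =>
      match l with
      | 0 => rw [hf0]; exact zero_mem _
      | Nat.succ m =>
        have : f (m + 1) = e (m + 1) - ∑ i ∈ Finset.range (m + 1), f i * c (m + 1 - i) := by
          rw [he (m + 1), Finset.sum_range_succ, Nat.sub_self, hc0, mul_one]
          ring
        rw [this]
        refine sub_mem (Ideal.subset_span ⟨m + 1, Nat.succ_le_succ (Nat.zero_le m), rfl⟩)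
          (Ideal.sum_mem _ fun i hi => Ideal.mul_mem_right _ _ ?_)
        exact ih i (Finset.mem_range.mp hi)
  apply le_antisymm <;> rw [Ideal.span_le] <;> rintro p ⟨l, hl, rfl⟩
  · rw [he l]
    refine Ideal.sum_mem _ fun i hi => ?_
    rcases Nat.eq_zero_or_pos i with hi0 | hi1
    · rw [hi0, hf0, zero_mul]; exact zero_mem _
    · exact Ideal.mul_mem_right _ _ (Ideal.subset_span ⟨i, hi1, rfl⟩)
  · exact hfmem l

theorem stmt18 {X Y Z : Type} [Fintype X] [Fintype Y] [Fintype Z]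
    [DecidableEq X] [DecidableEq Y] [DecidableEq Z] :
    Ideal.span {p : MvPolynomial (X ⊕ Y ⊕ Z) ℤ | ∃ l : ℕ, 1 ≤ l ∧
        p = esymmOf ℤ ((Finset.univ.image (Sum.inl : X → X ⊕ Y ⊕ Z)) ∪
              (Finset.univ.image (fun z : Z => Sum.inr (Sum.inr z) : Z → X ⊕ Y ⊕ Z))) l
          - esymmOf ℤ ((Finset.univ.image (fun y : Y => Sum.inr (Sum.inl y) : Y → X ⊕ Y ⊕ Z)) ∪
              (Finset.univ.image (fun z : Z => Sum.inr (Sum.inr z) : Z → X ⊕ Y ⊕ Z))) l} =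
      Ideal.span {p : MvPolynomial (X ⊕ Y ⊕ Z) ℤ | ∃ l : ℕ, 1 ≤ l ∧
        p = esymmOf ℤ (Finset.univ.image (Sum.inl : X → X ⊕ Y ⊕ Z)) l
          - esymmOf ℤ (Finset.univ.image (fun y : Y => Sum.inr (Sum.inl y) : Y → X ⊕ Y ⊕ Z)) l} := by
  classical
  set A : Finset (X ⊕ Y ⊕ Z) := Finset.univ.image (Sum.inl : X → X ⊕ Y ⊕ Z) with hA
  set B : Finset (X ⊕ Y ⊕ Z) :=
    Finset.univ.image (fun y : Y => Sum.inr (Sum.inl y) : Y → X ⊕ Y ⊕ Z) with hB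
  set C : Finset (X ⊕ Y ⊕ Z) :=
    Finset.univ.image (fun z : Z => Sum.inr (Sum.inr z) : Z → X ⊕ Y ⊕ Z) with hC
  have hAC : Disjoint A C := by
    rw [Finset.disjoint_left]
    rintro a ha hc
    simp only [hA, hC, Finset.mem_image] at ha hc
    obtain ⟨x, -, rfl⟩ := ha
    obtain ⟨z, -, hz⟩ := hc
    simp at hz
  have hBC : Disjoint B C := by
    rw [Finset.disjoint_left]
    rintro a ha hc
    simp only [hB, hC, Finset.mem_image] at ha hc
    obtain ⟨y, -, rfl⟩ := ha
    obtain ⟨z, -, hz⟩ := hc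
    simp at hz
  exact span_eq_aux
    (fun l => esymmOf ℤ (A ∪ C) l - esymmOf ℤ (B ∪ C) l)
    (fun l => esymmOf ℤ A l - esymmOf ℤ B l)
    (fun l => esymmOf ℤ C l)
    (by simp [esymmOf_zero])
    (esymmOf_zero ℤ C)
    (fun l => by
      show esymmOf ℤ (A ∪ C) l - esymmOf ℤ (B ∪ C) l
          = ∑ i ∈ Finset.range (l + 1), (esymmOf ℤ A i - esymmOf ℤ B i) * esymmOf ℤ C (l - i)
      rw [esymmOf_union hAC, esymmOf_union hBC, ← Finset.sum_sub_distrib]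
      exact Finset.sum_congr rfl fun i _ => by ring)
end

section
/- Let I be a homogeneous ideal of ℤ[x_1, …, x_n] contained in the ideal (x_1, …, x_n), let R_ℤ = ℤ[x_1, …, x_n]/I, and let R_ℚ = ℚ[x_1, …, x_n]/I_ℚ, where I_ℚ is the ideal of ℚ[x_1, …, x_n] generated by the image of I. Then: (1) the ideals p_ℤ = (x_1, …, x_n)/I of R_ℤ and p_ℚ = (x_1, …, x_n)/I_ℚ of R_ℚ are prime, and their heights are equal; (2) the Krull dimension of R_ℤ is at least the Krull dimension of R_ℚ plus 1. -/
open MvPolynomial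

section Aux

attribute [local instance] MvPolynomial.algebraMvPolynomial

variable {n : ℕ}

private lemma mem_span_range_X' {R : Type*} [CommRing R] {x : MvPolynomial (Fin n) R} :
    x ∈ Ideal.span (Set.range (X : Fin n → MvPolynomial (Fin n) R)) ↔ constantCoeff x = 0 := by
  rw [← Set.image_univ, mem_ideal_span_X_image, constantCoeff_eq]
  constructor
  · intro h
    by_contra hc
    obtain ⟨i, -, hi⟩ := h 0 (mem_support_iff.mpr hc)
    simp at hi
  · intro h m hm
    by_contra hc
    push_neg at hc
    have hm0 : m = 0 := Finsupp.ext fun i => hc i (Set.mem_univ i)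
    rw [hm0] at hm
    exact mem_support_iff.mp hm h

private lemma span_range_X_isPrime' (R : Type*) [CommRing R] [IsDomain R] :
    (Ideal.span (Set.range (X : Fin n → MvPolynomial (Fin n) R))).IsPrime := by
  have : Ideal.span (Set.range (X : Fin n → MvPolynomial (Fin n) R)) =
      RingHom.ker (constantCoeff : MvPolynomial (Fin n) R →+* R) :=
    Ideal.ext fun _ => by rw [mem_span_range_X', RingHom.mem_ker]
  rw [this]
  exact RingHom.ker_isPrime _

private lemma comap_span_range_X' :
    (Ideal.span (Set.range (X : Fin n → MvPolynomial (Fin n) ℚ))).comap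
        (MvPolynomial.map (Int.castRingHom ℚ)) =
      Ideal.span (Set.range (X : Fin n → MvPolynomial (Fin n) ℤ)) := by
  ext x
  rw [Ideal.mem_comap, mem_span_range_X', mem_span_range_X', constantCoeff_map]
  simp

private lemma disjoint_Msub' {Q : Ideal (MvPolynomial (Fin n) ℤ)}
    (h : Q ≤ Ideal.span (Set.range (X : Fin n → MvPolynomial (Fin n) ℤ))) :
    Disjoint (((nonZeroDivisors ℤ).map (C (σ := Fin n)) : Submonoid (MvPolynomial (Fin n) ℤ)) :
        Set (MvPolynomial (Fin n) ℤ)) (Q : Set (MvPolynomial (Fin n) ℤ)) := by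
  rw [Set.disjoint_left]
  rintro x ⟨m, hm, rfl⟩ hx
  have h0 : constantCoeff (C (σ := Fin n) m) = 0 := mem_span_range_X'.mp (h hx)
  rw [constantCoeff_C] at h0
  exact mem_nonZeroDivisors_iff_ne_zero.mp hm h0

private lemma comap_map_mk' {R : Type*} [CommRing R] (J P : Ideal R) (hJP : J ≤ P) :
    (Ideal.map (Ideal.Quotient.mk J) P).comap (Ideal.Quotient.mk J) = P := by
  rw [Ideal.comap_map_of_surjective _ Ideal.Quotient.mk_surjective,
    ← RingHom.ker_eq_comap_bot, Ideal.mk_ker, sup_eq_left.mpr hJP]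

private noncomputable def specIso' {R : Type*} [CommRing R] (J : Ideal R) :
    PrimeSpectrum (R ⧸ J) ≃o {Q : Ideal R // Q.IsPrime ∧ J ≤ Q} where
  toFun q := ⟨q.asIdeal.comap (Ideal.Quotient.mk J), Ideal.comap_isPrime _ _,
    fun x hx => by
      show Ideal.Quotient.mk J x ∈ q.asIdeal
      rw [Ideal.Quotient.eq_zero_iff_mem.mpr hx]
      exact zero_mem _⟩
  invFun Q := ⟨Ideal.map (Ideal.Quotient.mk J) Q.1, by
    haveI := Q.2.1
    exact Ideal.map_isPrime_of_surjective Ideal.Quotient.mk_surjective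
      (by rw [Ideal.mk_ker]; exact Q.2.2)⟩
  left_inv q := PrimeSpectrum.ext
    (Ideal.map_comap_of_surjective _ Ideal.Quotient.mk_surjective _)
  right_inv Q := Subtype.ext (by
    simpa [← RingHom.ker_eq_comap_bot, Ideal.mk_ker, sup_eq_left.mpr Q.2.2] using
      Ideal.comap_map_of_surjective (Ideal.Quotient.mk J) Ideal.Quotient.mk_surjective Q.1)
  map_rel_iff' {a b} := by
    simp only [Equiv.coe_fn_mk, Subtype.mk_le_mk]
    constructor
    · intro h
      rw [← PrimeSpectrum.asIdeal_le_asIdeal,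
        ← Ideal.map_comap_of_surjective _ Ideal.Quotient.mk_surjective a.asIdeal,
        ← Ideal.map_comap_of_surjective _ Ideal.Quotient.mk_surjective b.asIdeal]
      exact Ideal.map_mono h
    · intro h
      exact Ideal.comap_mono ((PrimeSpectrum.asIdeal_le_asIdeal _ _).mpr h)

private noncomputable def quotIso' {R : Type*} [CommRing R] (J P : Ideal R) (hJP : J ≤ P) :
    {q : PrimeSpectrum (R ⧸ J) // q.asIdeal ≤ Ideal.map (Ideal.Quotient.mk J) P} ≃o
      {Q : Ideal R // Q.IsPrime ∧ J ≤ Q ∧ Q ≤ P} where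
  toFun q := ⟨q.1.asIdeal.comap (Ideal.Quotient.mk J), Ideal.comap_isPrime _ _,
    fun x hx => by
      show Ideal.Quotient.mk J x ∈ q.1.asIdeal
      rw [Ideal.Quotient.eq_zero_iff_mem.mpr hx]
      exact zero_mem _,
    by
      have h : q.1.asIdeal.comap (Ideal.Quotient.mk J) ≤
          (Ideal.map (Ideal.Quotient.mk J) P).comap (Ideal.Quotient.mk J) :=
        Ideal.comap_mono q.2
      rwa [comap_map_mk' J P hJP] at h⟩
  invFun Q := ⟨⟨Ideal.map (Ideal.Quotient.mk J) Q.1, by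
      haveI := Q.2.1
      exact Ideal.map_isPrime_of_surjective Ideal.Quotient.mk_surjective
        (by rw [Ideal.mk_ker]; exact Q.2.2.1)⟩,
    Ideal.map_mono Q.2.2.2⟩
  left_inv q := Subtype.ext (PrimeSpectrum.ext
    (Ideal.map_comap_of_surjective _ Ideal.Quotient.mk_surjective _))
  right_inv Q := Subtype.ext (by
    simpa [← RingHom.ker_eq_comap_bot, Ideal.mk_ker, sup_eq_left.mpr Q.2.2.1] using
      Ideal.comap_map_of_surjective (Ideal.Quotient.mk J) Ideal.Quotient.mk_surjective Q.1)
  map_rel_iff' {a b} := by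
    simp only [Equiv.coe_fn_mk, Subtype.mk_le_mk]
    constructor
    · intro h
      show a.1 ≤ b.1
      rw [← PrimeSpectrum.asIdeal_le_asIdeal,
        ← Ideal.map_comap_of_surjective _ Ideal.Quotient.mk_surjective a.1.asIdeal,
        ← Ideal.map_comap_of_surjective _ Ideal.Quotient.mk_surjective b.1.asIdeal]
      exact Ideal.map_mono h
    · intro h
      exact Ideal.comap_mono ((PrimeSpectrum.asIdeal_le_asIdeal _ _).mpr h)

private noncomputable def locIso' (n : ℕ) (I : Ideal (MvPolynomial (Fin n) ℤ))
    (hsub : I ≤ Ideal.span (Set.range (X : Fin n → MvPolynomial (Fin n) ℤ))) :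
    {Q : Ideal (MvPolynomial (Fin n) ℤ) // Q.IsPrime ∧ I ≤ Q ∧
        Q ≤ Ideal.span (Set.range (X : Fin n → MvPolynomial (Fin n) ℤ))} ≃o
      {Q : Ideal (MvPolynomial (Fin n) ℚ) // Q.IsPrime ∧
        Ideal.map (MvPolynomial.map (Int.castRingHom ℚ)) I ≤ Q ∧
        Q ≤ Ideal.span (Set.range (X : Fin n → MvPolynomial (Fin n) ℚ))} := by
  have e : algebraMap (MvPolynomial (Fin n) ℤ) (MvPolynomial (Fin n) ℚ) =
      MvPolynomial.map (Int.castRingHom ℚ) := by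
    rw [MvPolynomial.algebraMap_def, algebraMap_int_eq]
  rw [← e]
  exact
  { toFun := fun Q => ⟨Ideal.map (algebraMap _ _) Q.1,
      IsLocalization.isPrime_of_isPrime_disjoint ((nonZeroDivisors ℤ).map (C (σ := Fin n))) _
        Q.1 Q.2.1 (disjoint_Msub' Q.2.2.2),
      Ideal.map_mono Q.2.2.1,
      Ideal.map_le_iff_le_comap.mpr (by rw [e, comap_span_range_X']; exact Q.2.2.2)⟩
    invFun := fun Q => ⟨Ideal.comap (algebraMap _ _) Q.1,
      by haveI := Q.2.1; exact Ideal.comap_isPrime _ _,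
      Ideal.map_le_iff_le_comap.mp Q.2.2.1,
      le_trans (Ideal.comap_mono (f := algebraMap (MvPolynomial (Fin n) ℤ) (MvPolynomial (Fin n) ℚ)) Q.2.2.2) (by rw [e]; exact comap_span_range_X'.le)⟩
    left_inv := fun Q => Subtype.ext
      (IsLocalization.comap_map_of_isPrime_disjoint ((nonZeroDivisors ℤ).map (C (σ := Fin n))) _
        Q.2.1 (disjoint_Msub' Q.2.2.2))
    right_inv := fun Q => Subtype.ext
      (IsLocalization.map_comap ((nonZeroDivisors ℤ).map (C (σ := Fin n))) _ Q.1)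
    map_rel_iff' := by
      intro a b
      simp only [Equiv.coe_fn_mk, Subtype.mk_le_mk]
      constructor
      · intro h
        have h2 := Ideal.comap_mono
          (f := algebraMap (MvPolynomial (Fin n) ℤ) (MvPolynomial (Fin n) ℚ)) h
        change (Ideal.map (algebraMap _ (MvPolynomial (Fin n) ℚ)) a.1).under _ ≤
          (Ideal.map (algebraMap _ (MvPolynomial (Fin n) ℚ)) b.1).under _ at h2
        rwa [IsLocalization.comap_map_of_isPrime_disjoint
            ((nonZeroDivisors ℤ).map (C (σ := Fin n))) _ a.2.1 (disjoint_Msub' a.2.2.2),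
          IsLocalization.comap_map_of_isPrime_disjoint
            ((nonZeroDivisors ℤ).map (C (σ := Fin n))) _ b.2.1 (disjoint_Msub' b.2.2.2)] at h2
      · intro h
        exact Ideal.map_mono h }

private lemma krullDim_add_one_le' {α β : Type*} [Preorder α] [Preorder β] (f : α → β)
    (hf : StrictMono f) (h : ∀ a, ∃ b, f a < b) :
    Order.krullDim α + 1 ≤ Order.krullDim β := by
  rcases isEmpty_or_nonempty α with hα | hα
  · rw [Order.krullDim_eq_bot, WithBot.bot_add]
    exact bot_le
  · have hβ : Nonempty β := ⟨f (Classical.arbitrary α)⟩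
    have key : ∀ p : LTSeries α, (p.length : ℕ∞) + 1 ≤ ⨆ q : LTSeries β, (q.length : ℕ∞) := by
      intro p
      obtain ⟨b, hb⟩ := h p.last
      refine le_trans ?_ (le_iSup (fun q : LTSeries β => (q.length : ℕ∞))
        ((p.map f hf).snoc b (by rw [LTSeries.last_map]; exact hb)))
      simp
    rw [Order.krullDim_eq_iSup_length, Order.krullDim_eq_iSup_length]
    have hfin : ((⨆ p : LTSeries α, (p.length : ℕ∞)) + 1 : ℕ∞) ≤
        ⨆ q : LTSeries β, (q.length : ℕ∞) := by
      rw [ENat.iSup_add]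
      exact iSup_le key
    exact_mod_cast hfin

private instance : IsJacobsonRing ℤ := by
  rw [isJacobsonRing_iff_prime_eq]
  intro P hP
  rcases eq_or_ne P ⊥ with rfl | hne
  · refine eq_bot_iff.mpr fun x hx => ?_
    have hu := Ideal.mem_jacobson_bot.mp hx x
    rw [Ideal.mem_bot]
    rcases Int.isUnit_iff.mp hu with h | h
    · nlinarith [mul_self_nonneg x]
    · nlinarith [mul_self_nonneg x]
  · haveI := hP
    exact Ideal.jacobson_eq_self_of_isMaximal (H := IsPrime.to_maximal_ideal hne)

private lemma exists_C_mem_of_isMaximal' {n : ℕ} (M : Ideal (MvPolynomial (Fin n) ℤ))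
    (hM : M.IsMaximal) : ∃ c : ℤ, c ≠ 0 ∧ (C c : MvPolynomial (Fin n) ℤ) ∈ M := by
  haveI := hM
  have hmax : (M.comap (C : ℤ →+* MvPolynomial (Fin n) ℤ)).IsMaximal := by
    haveI : (⊥ : Ideal (MvPolynomial (Fin n) ℤ ⧸ M)).IsMaximal :=
      (Ideal.bot_quotient_isMaximal_iff _).mpr hM
    rw [← Ideal.mk_ker (I := M), RingHom.ker_eq_comap_bot, Ideal.comap_comap]
    exact Ideal.isMaximal_comap_of_isIntegral_of_isMaximal' _
      (MvPolynomial.quotient_mk_comp_C_isIntegral_of_isJacobsonRing M) ⊥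
  have hne : M.comap (C : ℤ →+* MvPolynomial (Fin n) ℤ) ≠ ⊥ :=
    Ring.ne_bot_of_isMaximal_of_not_isField hmax Int.not_isField
  obtain ⟨c, hc, hc0⟩ := Submodule.exists_mem_ne_zero_of_ne_bot hne
  exact ⟨c, hc0, hc⟩

end Aux

theorem stmt19 {n : ℕ} (I : Ideal (MvPolynomial (Fin n) ℤ))
    (hhom : ∃ gens : Set (MvPolynomial (Fin n) ℤ),
      (∀ f ∈ gens, ∃ d : ℕ, f.IsHomogeneous d) ∧ I = Ideal.span gens)
    (hsub : I ≤ Ideal.span (Set.range (X : Fin n → MvPolynomial (Fin n) ℤ))) :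
    (Ideal.map (Ideal.Quotient.mk I)
        (Ideal.span (Set.range (X : Fin n → MvPolynomial (Fin n) ℤ)))).IsPrime ∧
    (Ideal.map (Ideal.Quotient.mk (Ideal.map (MvPolynomial.map (Int.castRingHom ℚ)) I))
        (Ideal.span (Set.range (X : Fin n → MvPolynomial (Fin n) ℚ)))).IsPrime ∧
    Order.krullDim {q : PrimeSpectrum (MvPolynomial (Fin n) ℤ ⧸ I) //
        q.asIdeal ≤ Ideal.map (Ideal.Quotient.mk I)
          (Ideal.span (Set.range (X : Fin n → MvPolynomial (Fin n) ℤ)))} =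
      Order.krullDim {q : PrimeSpectrum (MvPolynomial (Fin n) ℚ ⧸
            Ideal.map (MvPolynomial.map (Int.castRingHom ℚ)) I) //
        q.asIdeal ≤ Ideal.map
          (Ideal.Quotient.mk (Ideal.map (MvPolynomial.map (Int.castRingHom ℚ)) I))
          (Ideal.span (Set.range (X : Fin n → MvPolynomial (Fin n) ℚ)))} ∧
    ringKrullDim (MvPolynomial (Fin n) ℚ ⧸
        Ideal.map (MvPolynomial.map (Int.castRingHom ℚ)) I) + 1 ≤
      ringKrullDim (MvPolynomial (Fin n) ℤ ⧸ I) := by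
  classical
  letI : Algebra (MvPolynomial (Fin n) ℤ) (MvPolynomial (Fin n) ℚ) :=
    MvPolynomial.algebraMvPolynomial
  have e : algebraMap (MvPolynomial (Fin n) ℤ) (MvPolynomial (Fin n) ℚ) =
      MvPolynomial.map (Int.castRingHom ℚ) := by
    rw [MvPolynomial.algebraMap_def, algebraMap_int_eq]
  have hIQ : Ideal.map (MvPolynomial.map (Int.castRingHom ℚ)) I ≤
      Ideal.span (Set.range (X : Fin n → MvPolynomial (Fin n) ℚ)) :=
    Ideal.map_le_iff_le_comap.mpr (le_trans hsub (le_of_eq comap_span_range_X'.symm))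
  refine ⟨?_, ?_, ?_, ?_⟩
  · haveI := span_range_X_isPrime' (n := n) ℤ
    exact Ideal.map_isPrime_of_surjective Ideal.Quotient.mk_surjective
      (by rw [Ideal.mk_ker]; exact hsub)
  · haveI := span_range_X_isPrime' (n := n) ℚ
    exact Ideal.map_isPrime_of_surjective Ideal.Quotient.mk_surjective
      (by rw [Ideal.mk_ker]; exact hIQ)
  · exact Order.krullDim_eq_of_orderIso
      ((quotIso' I _ hsub).trans ((locIso' n I hsub).trans (quotIso' _ _ hIQ).symm))
  · -- dimension inequality
    set IQ := Ideal.map (MvPolynomial.map (Int.castRingHom ℚ)) I with hIQdef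
    have hIQ' : Ideal.map (algebraMap (MvPolynomial (Fin n) ℤ) (MvPolynomial (Fin n) ℚ)) I = IQ := by
      rw [e]
    let g : {Q : Ideal (MvPolynomial (Fin n) ℚ) // Q.IsPrime ∧ IQ ≤ Q} →
        {Q : Ideal (MvPolynomial (Fin n) ℤ) // Q.IsPrime ∧ I ≤ Q} :=
      fun Q => ⟨Q.1.comap (algebraMap _ _),
        by haveI := Q.2.1; exact Ideal.comap_isPrime _ _,
        Ideal.map_le_iff_le_comap.mp (by rw [hIQ']; exact Q.2.2)⟩
    have hg : StrictMono g := by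
      intro a b hab
      rw [lt_iff_le_and_ne] at hab ⊢
      refine ⟨Ideal.comap_mono hab.1, fun hEq => hab.2 ?_⟩
      have := congrArg (fun Q : {Q : Ideal (MvPolynomial (Fin n) ℤ) // Q.IsPrime ∧ I ≤ Q} =>
        Ideal.map (algebraMap (MvPolynomial (Fin n) ℤ) (MvPolynomial (Fin n) ℚ)) Q.1) hEq
      simp only [g] at this
      rw [IsLocalization.map_comap ((nonZeroDivisors ℤ).map (C (σ := Fin n))) _ a.1,
        IsLocalization.map_comap ((nonZeroDivisors ℤ).map (C (σ := Fin n))) _ b.1] at this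
      exact Subtype.ext this
    have hup : ∀ Q, ∃ Q', g Q < Q' := by
      intro Q
      haveI hQp : Q.1.IsPrime := Q.2.1
      have hne : (g Q).1 ≠ ⊤ := (Ideal.comap_isPrime _ _).ne_top
      obtain ⟨Mx, hMx, hle⟩ := Ideal.exists_le_maximal _ hne
      refine ⟨⟨Mx, hMx.isPrime, le_trans (g Q).2.2 hle⟩, ?_⟩
      rw [lt_iff_le_and_ne]
      refine ⟨hle, fun hEq => ?_⟩
      obtain ⟨c, hc0, hcM⟩ := exists_C_mem_of_isMaximal' Mx hMx
      have hcg : (C c : MvPolynomial (Fin n) ℤ) ∈ (g Q).1 := by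
        rw [show ((g Q : {Q : Ideal (MvPolynomial (Fin n) ℤ) // Q.IsPrime ∧ I ≤ Q}) :
          Ideal (MvPolynomial (Fin n) ℤ)) = Mx from congrArg Subtype.val hEq]
        exact hcM
      have hmem : (algebraMap (MvPolynomial (Fin n) ℤ) (MvPolynomial (Fin n) ℚ))
          (C c) ∈ Q.1 := hcg
      rw [e, MvPolynomial.map_C] at hmem
      have hunit : IsUnit (C ((Int.castRingHom ℚ) c) : MvPolynomial (Fin n) ℚ) := by
        refine IsUnit.map (C : ℚ →+* MvPolynomial (Fin n) ℚ) (isUnit_iff_ne_zero.mpr ?_)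
        simpa using hc0
      exact hQp.ne_top (Q.1.eq_top_of_isUnit_mem hmem hunit)
    have hmain := krullDim_add_one_le' g hg hup
    have e1 : ringKrullDim (MvPolynomial (Fin n) ℚ ⧸ IQ) =
        Order.krullDim {Q : Ideal (MvPolynomial (Fin n) ℚ) // Q.IsPrime ∧ IQ ≤ Q} :=
      Order.krullDim_eq_of_orderIso (specIso' IQ)
    have e2 : ringKrullDim (MvPolynomial (Fin n) ℤ ⧸ I) =
        Order.krullDim {Q : Ideal (MvPolynomial (Fin n) ℤ) // Q.IsPrime ∧ I ≤ Q} :=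
      Order.krullDim_eq_of_orderIso (specIso' I)
    rw [e1, e2]
    exact hmain
end
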